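/- Let F be a free group of rank n ≥ 2 and suppose Δ is a cyclically reduced word in F. If a reduced word V satisfies |V| ≤ ‖Δ^{−ε} V Δ^{ε}‖ for ε = ±1 (where ‖·‖ denotes the length of the free reduction), then |V| ≤ ‖Δ^{−k} V Δ^{k}‖ for every integer k. -/

import Mathlib

set_option linter.unusedSectionVars false
set_option linter.unusedVariables false


namespace StmtAux
open FreeGroup List

variable {α : Type*} [DecidableEq α]

/-- A word is reduced: no adjacent cancelling pair. -/
def Rd (L : List (α × Bool)) : Prop :=
  List.Chain' (fun x y => ¬(x.1 = y.1 ∧ x.2 = !y.2)) L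

/-- No cancellation at the junction of `A ++ B`. -/
def Compat (A B : List (α × Bool)) : Prop :=
  ∀ x ∈ A.getLast?, ∀ y ∈ B.head?, ¬(x.1 = y.1 ∧ x.2 = !y.2)

lemma rd_append_iff {A B : List (α × Bool)} :
    Rd (A ++ B) ↔ Rd A ∧ Rd B ∧ Compat A B := List.isChain_append

lemma rd_reduce (L : List (α × Bool)) : Rd (reduce L) := by
  induction L with
  | nil => simp [Rd, List.Chain']
  | cons x L ih =>
    rw [reduce.cons]
    rcases h : reduce L with _ | ⟨hd, tl⟩
    · simp [Rd, List.Chain']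
    · rw [h] at ih
      show Rd (if x.1 = hd.1 ∧ x.2 = !hd.2 then tl else x :: hd :: tl)
      by_cases hc : x.1 = hd.1 ∧ x.2 = !hd.2
      · rw [if_pos hc]; exact ih.tail
      · simp only [if_neg hc]
        exact (List.isChain_cons.2 ⟨by simpa using hc, ih⟩)

lemma rd_eq {L : List (α × Bool)} (h : Rd L) : reduce L = L := by
  induction L with
  | nil => rfl
  | cons x L ih =>
    have hL : Rd L := h.tail
    rw [reduce.cons, ih hL]
    rcases hL' : L with _ | ⟨hd, tl⟩
    · rfl
    · have := (List.isChain_cons.1 (hL' ▸ h)).1 hd (by simp)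
      simp [this]

lemma rd_iff {L : List (α × Bool)} : reduce L = L ↔ Rd L :=
  ⟨fun h => h ▸ rd_reduce L, rd_eq⟩

lemma rd_toWord (x : FreeGroup α) : Rd x.toWord := rd_iff.1 (reduce_toWord x)

theorem split : ∀ (A B : List (α × Bool)), Rd A → Rd B →
    ∃ p c s, A = p ++ c ∧ B = invRev c ++ s ∧ reduce (A ++ B) = p ++ s := by
  intro A B hA hB
  by_cases hc : Compat A B
  · exact ⟨A, [], B, by simp, by simp [invRev], rd_eq (rd_append_iff.2 ⟨hA, hB, hc⟩)⟩
  · simp only [Compat, not_forall] at hc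
    obtain ⟨x, hx, y, hy, hxy⟩ := hc
    have hxy' : ¬¬(x.1 = y.1 ∧ x.2 = !y.2) := hxy
    rw [not_not] at hxy'
    obtain ⟨h1, h2⟩ := hxy'
    have hAne : A ≠ [] := by rintro rfl; simp at hx
    have hBne : B ≠ [] := by rintro rfl; simp at hy
    have hAeq : A = A.dropLast ++ [x] := by
      have := List.dropLast_append_getLast hAne
      rw [List.getLast?_eq_getLast hAne] at hx
      simp only [Option.mem_def, Option.some.injEq] at hx
      rw [hx] at this; exact this.symm
    have hBeq : B = (x.1, !x.2) :: B.tail := by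
      rw [List.head?_eq_head hBne] at hy
      simp only [Option.mem_def, Option.some.injEq] at hy
      have : y = (x.1, !x.2) := by
        ext
        · exact h1.symm
        · rw [h2, Bool.not_not]
      rw [← this, ← hy]
      exact (List.cons_head_tail hBne).symm
    have hstep : Red.Step (A ++ B) (A.dropLast ++ B.tail) := by
      nth_rewrite 1 [hAeq, hBeq]
      have : A.dropLast ++ [x] ++ ((x.1, !x.2) :: B.tail)
          = A.dropLast ++ (x.1, x.2) :: (x.1, !x.2) :: B.tail := by simp
      rw [this]
      exact Red.Step.not
    have hred : reduce (A ++ B) = reduce (A.dropLast ++ B.tail) := reduce.Step.eq hstep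
    have hA' : Rd A.dropLast := hA.prefix (List.dropLast_prefix A)
    have hB' : Rd B.tail := hB.tail
    obtain ⟨p, c, s, e1, e2, e3⟩ := split A.dropLast B.tail hA' hB'
    refine ⟨p, c ++ [x], s, ?_, ?_, ?_⟩
    · rw [hAeq, e1, List.append_assoc]
    · rw [hBeq, e2]
      simp [invRev]
    · rw [hred, e3]
termination_by A _ => A.length
decreasing_by
  have : A.length ≠ 0 := by simpa using hAne
  simp only [List.length_dropLast]
  omega


lemma norm_def (x : FreeGroup α) : norm x = x.toWord.length := rfl

lemma norm_mk (L : List (α × Bool)) : norm (mk L) = (reduce L).length := by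
  rw [norm_def, toWord_mk]

lemma reduce_append_right (X Y : List (α × Bool)) :
    reduce (X ++ Y) = reduce (X ++ reduce Y) :=
  reduce.eq_of_red (Red.append_append Red.refl reduce.red)

lemma getLast?_invRev (L : List (α × Bool)) :
    (invRev L).getLast? = L.head?.map (fun g => (g.1, !g.2)) := by
  simp [invRev, List.getLast?_reverse, List.head?_map]

lemma head?_invRev (L : List (α × Bool)) :
    (invRev L).head? = L.getLast?.map (fun g => (g.1, !g.2)) := by
  simp [invRev, List.head?_reverse, List.getLast?_map]

lemma compat_invRev {A B : List (α × Bool)} (h : Compat A B) :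
    Compat (invRev B) (invRev A) := by
  intro x hx y hy
  rw [Option.mem_def, getLast?_invRev, Option.map_eq_some_iff] at hx
  rw [Option.mem_def, head?_invRev, Option.map_eq_some_iff] at hy
  obtain ⟨b, hb, rfl⟩ := hx
  obtain ⟨a, ha, rfl⟩ := hy
  rintro ⟨u, v⟩
  simp only [Bool.not_not] at u v
  exact h a ha b hb ⟨u.symm, by rw [← v]⟩

lemma triple_mk (x y z : FreeGroup α) :
    x * y * z = mk ((x.toWord ++ y.toWord) ++ z.toWord) := by
  rw [← mul_mk, ← mul_mk, mk_toWord, mk_toWord, mk_toWord]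

theorem key (Δ W : FreeGroup α) (hc : Compat (Δ⁻¹.toWord) W.toWord) :
    norm W ≤ norm (Δ⁻¹ * W * Δ) := by
  have hD' : (Δ⁻¹.toWord).length = Δ.toWord.length := by
    rw [toWord_inv, invRev_length]
  obtain ⟨p, c, s, e1, e2, e3⟩ := split W.toWord Δ.toWord (rd_toWord W) (rd_toWord Δ)
  have l1 : W.toWord.length = p.length + c.length := by rw [e1]; simp
  have l2 : Δ.toWord.length = c.length + s.length := by rw [e2]; simp [invRev_length]
  rw [triple_mk, norm_mk, List.append_assoc, reduce_append_right, e3, norm_def]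
  by_cases hp : p = []
  · subst hp
    simp only [List.length_nil, Nat.zero_add] at l1
    have hs : Rd s := (rd_append_iff.1 (e2 ▸ rd_toWord Δ)).2.1
    obtain ⟨P, C, S, f1, f2, f3⟩ := split Δ⁻¹.toWord s (rd_toWord Δ⁻¹) hs
    have g1 : Δ⁻¹.toWord.length = P.length + C.length := by rw [f1]; simp
    have g2 : s.length = C.length + S.length := by rw [f2]; simp [invRev_length]
    rw [List.nil_append, f3]
    simp only [List.length_append]
    omega
  · have hps : Rd (p ++ s) := e3 ▸ rd_reduce _
    have hhead : (p ++ s).head? = W.toWord.head? := by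
      rcases p with _ | ⟨q, p'⟩
      · exact absurd rfl hp
      · rw [e1]; simp
    have hcomp : Compat Δ⁻¹.toWord (p ++ s) := by
      intro a ha b hb
      exact hc a ha b (by rwa [Option.mem_def, hhead] at hb)
    have : reduce (Δ⁻¹.toWord ++ (p ++ s)) = Δ⁻¹.toWord ++ (p ++ s) :=
      rd_eq (rd_append_iff.2 ⟨rd_toWord Δ⁻¹, hps, hcomp⟩)
    rw [this]
    simp only [List.length_append]
    omega

theorem full (Δ W : FreeGroup α) (hW : W ≠ 1) (hl : Compat Δ⁻¹.toWord W.toWord)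
    (hr : Compat W.toWord Δ.toWord) :
    norm (Δ⁻¹ * W * Δ) = norm W + 2 * norm Δ := by
  have hWne : W.toWord ≠ [] := fun h => hW (toWord_eq_nil_iff.1 h)
  have hD' : (Δ⁻¹.toWord).length = Δ.toWord.length := by
    rw [toWord_inv, invRev_length]
  have h1 : Rd (W.toWord ++ Δ.toWord) :=
    rd_append_iff.2 ⟨rd_toWord W, rd_toWord Δ, hr⟩
  have hhead : (W.toWord ++ Δ.toWord).head? = W.toWord.head? := by
    rcases hW' : W.toWord with _ | ⟨q, t⟩
    · exact absurd hW' hWne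
    · simp
  have hcomp : Compat Δ⁻¹.toWord (W.toWord ++ Δ.toWord) := by
    intro a ha b hb
    exact hl a ha b (by rwa [Option.mem_def, hhead] at hb)
  have hred : reduce (Δ⁻¹.toWord ++ (W.toWord ++ Δ.toWord))
      = Δ⁻¹.toWord ++ (W.toWord ++ Δ.toWord) :=
    rd_eq (rd_append_iff.2 ⟨rd_toWord Δ⁻¹, h1, hcomp⟩)
  rw [triple_mk, norm_mk, List.append_assoc, hred, norm_def, norm_def]
  simp only [List.length_append]
  omega

lemma dich_left {Δ W : FreeGroup α} (hDD : Compat Δ.toWord Δ.toWord)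
    (h : ¬ Compat Δ⁻¹.toWord W.toWord) : Compat Δ.toWord W.toWord := by
  simp only [Compat, not_forall] at h
  obtain ⟨x, hx, y, hy, hxy⟩ := h
  rw [not_not] at hxy
  obtain ⟨u, v⟩ := hxy
  rw [Option.mem_def, toWord_inv, getLast?_invRev, Option.map_eq_some_iff] at hx
  obtain ⟨hd, hhd, rfl⟩ := hx
  simp only at u v
  have hy' : y = hd := by
    ext
    · exact u.symm
    · exact (Bool.not_inj v).symm
  subst hy'
  intro a ha b hb hab
  rw [Option.mem_def, hy] at hb
  obtain rfl : y = b := by injection hb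
  exact hDD a ha y hhd hab

lemma dich_right {Δ W : FreeGroup α} (hDD : Compat Δ.toWord Δ.toWord)
    (h : ¬ Compat W.toWord Δ.toWord) : Compat W.toWord Δ⁻¹.toWord := by
  simp only [Compat, not_forall] at h
  obtain ⟨x, hx, y, hy, hxy⟩ := h
  rw [not_not] at hxy
  obtain ⟨u, v⟩ := hxy
  intro a ha b hb hab
  rw [Option.mem_def, hx] at ha
  obtain rfl : x = a := by injection ha
  rw [Option.mem_def, toWord_inv, head?_invRev, Option.map_eq_some_iff] at hb
  obtain ⟨ld, hld, rfl⟩ := hb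
  obtain ⟨u2, v2⟩ := hab
  simp only [Bool.not_not] at u2 v2
  exact hDD ld hld y hy ⟨u2.symm.trans u, by rw [← v2, v]⟩

theorem conv (Δ W : FreeGroup α) (hcyc : norm (Δ * Δ) = 2 * norm Δ) :
    2 * norm W ≤ norm (Δ⁻¹ * W * Δ) + norm (Δ * W * Δ⁻¹) := by
  by_cases hW : W = 1
  · subst hW; simp
  have hDD : Compat Δ.toWord Δ.toWord := by
    obtain ⟨p, c, s, e1, e2, e3⟩ := split Δ.toWord Δ.toWord (rd_toWord Δ) (rd_toWord Δ)
    have hmm : Δ * Δ = mk (Δ.toWord ++ Δ.toWord) := by rw [← mul_mk, mk_toWord]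
    have hlen : (reduce (Δ.toWord ++ Δ.toWord)).length = 2 * Δ.toWord.length := by
      rw [← norm_mk, ← hmm, hcyc, norm_def]
    have l1 : Δ.toWord.length = p.length + c.length := by rw [e1]; simp
    have l2 : Δ.toWord.length = c.length + s.length := by rw [e2]; simp [invRev_length]
    have l3 : (reduce (Δ.toWord ++ Δ.toWord)).length = p.length + s.length := by
      rw [e3]; simp
    have hc0 : c = [] := List.length_eq_zero_iff.1 (by omega)
    subst hc0
    rw [List.append_nil] at e1
    simp only [invRev, List.map_nil, List.reverse_nil, List.nil_append] at e2
    rw [← e1, ← e2] at e3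
    exact (rd_append_iff.1 (rd_iff.1 e3)).2.2
  have tri1 : norm W ≤ 2 * norm Δ + norm (Δ⁻¹ * W * Δ) := by
    have hWe : W = Δ * (Δ⁻¹ * W * Δ) * Δ⁻¹ := by group
    calc norm W = norm (Δ * (Δ⁻¹ * W * Δ) * Δ⁻¹) := by rw [← hWe]
    _ ≤ norm Δ + norm (Δ⁻¹ * W * Δ) + norm Δ⁻¹ :=
        le_trans (FreeGroup.norm_mul_le _ _) (add_le_add_left (FreeGroup.norm_mul_le _ _) _)
    _ = 2 * norm Δ + norm (Δ⁻¹ * W * Δ) := by rw [norm_inv_eq]; ring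
  have tri2 : norm W ≤ 2 * norm Δ + norm (Δ * W * Δ⁻¹) := by
    have hWe : W = Δ⁻¹ * (Δ * W * Δ⁻¹) * Δ := by group
    calc norm W = norm (Δ⁻¹ * (Δ * W * Δ⁻¹) * Δ) := by rw [← hWe]
    _ ≤ norm Δ⁻¹ + norm (Δ * W * Δ⁻¹) + norm Δ :=
        le_trans (FreeGroup.norm_mul_le _ _) (add_le_add_left (FreeGroup.norm_mul_le _ _) _)
    _ = 2 * norm Δ + norm (Δ * W * Δ⁻¹) := by rw [norm_inv_eq]; ring
  have keyB : Compat W.toWord Δ.toWord → norm W ≤ norm (Δ⁻¹ * W * Δ) := by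
    intro h
    have h2 := compat_invRev h
    rw [← toWord_inv, ← toWord_inv] at h2
    have := key Δ W⁻¹ h2
    rwa [norm_inv_eq, show Δ⁻¹ * W⁻¹ * Δ = (Δ⁻¹ * W * Δ)⁻¹ by group, norm_inv_eq] at this
  have keyC : Compat Δ.toWord W.toWord → norm W ≤ norm (Δ * W * Δ⁻¹) := by
    intro h
    have := key Δ⁻¹ W (by rwa [inv_inv])
    rwa [inv_inv] at this
  have keyD : Compat W.toWord Δ⁻¹.toWord → norm W ≤ norm (Δ * W * Δ⁻¹) := by
    intro h
    have h2 := compat_invRev h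
    rw [← toWord_inv, ← toWord_inv] at h2
    have := key Δ⁻¹ W⁻¹ h2
    rwa [norm_inv_eq, inv_inv,
      show Δ * W⁻¹ * Δ⁻¹ = (Δ * W * Δ⁻¹)⁻¹ by group, norm_inv_eq] at this
  by_cases cA : Compat Δ⁻¹.toWord W.toWord
  · by_cases cB : Compat W.toWord Δ.toWord
    · have hfull := full Δ W hW cA cB
      omega
    · have hk1 := key Δ W cA
      have hk2 := keyD (dich_right hDD cB)
      omega
  · have cA' := dich_left hDD cA
    by_cases cB' : Compat W.toWord Δ⁻¹.toWord
    · have hfull := full Δ⁻¹ W hW (by rwa [inv_inv]) cB'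
      rw [inv_inv, norm_inv_eq] at hfull
      omega
    · have cB : Compat W.toWord Δ.toWord := by
        by_contra hh; exact cB' (dich_right hDD hh)
      have hk1 := keyC cA'
      have hk2 := keyB cB
      omega


theorem main_pos (Δ V : FreeGroup α) (hcyc : norm (Δ * Δ) = 2 * norm Δ)
    (h1 : norm V ≤ norm (Δ⁻¹ * V * Δ)) :
    ∀ m : ℕ, norm V ≤ norm (Δ ^ (-(m : ℤ)) * V * Δ ^ (m : ℤ)) := by
  have hstep : ∀ m : ℕ, norm V ≤ norm (Δ ^ (-(m:ℤ)) * V * Δ ^ (m:ℤ)) ∧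
      norm (Δ ^ (-(m:ℤ)) * V * Δ ^ (m:ℤ)) ≤
        norm (Δ ^ (-((m:ℤ)+1)) * V * Δ ^ ((m:ℤ)+1)) := by
    intro m
    induction m with
    | zero =>
      constructor
      · simp
      · simp only [Nat.cast_zero, neg_zero, zpow_zero, one_mul, mul_one, zero_add,
          zpow_one, zpow_neg]
        exact h1
    | succ m ih =>
      have hid1 : Δ⁻¹ * (Δ ^ (-((m:ℤ)+1)) * V * Δ ^ ((m:ℤ)+1)) * Δ
          = Δ ^ (-((m:ℤ)+1+1)) * V * Δ ^ ((m:ℤ)+1+1) := by group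
      have hid2 : Δ * (Δ ^ (-((m:ℤ)+1)) * V * Δ ^ ((m:ℤ)+1)) * Δ⁻¹
          = Δ ^ (-(m:ℤ)) * V * Δ ^ (m:ℤ) := by group
      have hc := conv Δ (Δ ^ (-((m:ℤ)+1)) * V * Δ ^ ((m:ℤ)+1)) hcyc
      rw [hid1, hid2] at hc
      have ha := ih.1
      have hb := ih.2
      push_cast
      constructor
      · exact le_trans ha hb
      · omega
  exact fun m => (hstep m).1

end StmtAux

theorem stmt_11 (n : ℕ) (hn : 2 ≤ n) (Δ V : FreeGroup (Fin n))
    (hcyc : FreeGroup.norm (Δ * Δ) = 2 * FreeGroup.norm Δ)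
    (h1 : FreeGroup.norm V ≤ FreeGroup.norm (Δ⁻¹ * V * Δ))
    (h2 : FreeGroup.norm V ≤ FreeGroup.norm (Δ * V * Δ⁻¹)) :
    ∀ k : ℤ, FreeGroup.norm V ≤ FreeGroup.norm (Δ ^ (-k) * V * Δ ^ k) := by
  intro k
  rcases le_or_gt 0 k with hk | hk
  · obtain ⟨m, rfl⟩ := Int.eq_ofNat_of_zero_le hk
    exact StmtAux.main_pos Δ V hcyc h1 m
  · obtain ⟨m, hm⟩ := Int.eq_ofNat_of_zero_le (by omega : (0:ℤ) ≤ -k)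
    have hk' : k = -(m : ℤ) := by omega
    have hcyc' : FreeGroup.norm (Δ⁻¹ * Δ⁻¹) = 2 * FreeGroup.norm Δ⁻¹ := by
      rw [show Δ⁻¹ * Δ⁻¹ = (Δ * Δ)⁻¹ by group, FreeGroup.norm_inv_eq,
        FreeGroup.norm_inv_eq]
      exact hcyc
    have h1' : FreeGroup.norm V ≤ FreeGroup.norm ((Δ⁻¹)⁻¹ * V * Δ⁻¹) := by
      rwa [inv_inv]
    have hmain := StmtAux.main_pos Δ⁻¹ V hcyc' h1' m
    have e1 : (Δ⁻¹) ^ (-(m:ℤ)) = Δ ^ ((m:ℤ)) := by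
      rw [inv_zpow, ← zpow_neg, neg_neg]
    have e2 : (Δ⁻¹) ^ ((m:ℤ)) = Δ ^ (-(m:ℤ)) := by
      rw [inv_zpow, ← zpow_neg]
    rw [e1, e2] at hmain
    rw [hk', neg_neg]
    exact hmain
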